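/- Let H : ℂ^N → ℂ^N be linear and self-adjoint, let Û : ℂ^R → ℂ^N be a linear isometry with adjoint Û*, and let c : [t₀,t₁] → ℂ^R solve c'(t) = −i·Û* H(Û c(t)). Then the energy E(t) := ⟨Û c(t), H(Û c(t))⟩ is constant in t. -/

import Mathlib

open scoped InnerProductSpace

/-- Energy conservation for the projected Schrödinger equation: if `H` is
self-adjoint, `Uh` is a linear isometry and `c'(t) = -i Uh* H(Uh c(t))`, then
the energy `⟨Uh c(t), H(Uh c(t))⟩` is constant on `[t₀,t₁]`. -/
theorem energy_conserved_schrodinger {N R : ℕ} (t₀ t₁ : ℝ)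
    (H : EuclideanSpace ℂ (Fin N) →ₗ[ℂ] EuclideanSpace ℂ (Fin N))
    (hH : ∀ y z : EuclideanSpace ℂ (Fin N), ⟪H y, z⟫_ℂ = ⟪y, H z⟫_ℂ)
    (Uh : EuclideanSpace ℂ (Fin R) →ₗ[ℂ] EuclideanSpace ℂ (Fin N))
    (hUh : ∀ x y : EuclideanSpace ℂ (Fin R), ⟪Uh x, Uh y⟫_ℂ = ⟪x, y⟫_ℂ)
    (c : ℝ → EuclideanSpace ℂ (Fin R))
    (hc : ∀ t ∈ Set.Icc t₀ t₁,
      HasDerivAt c (-(Complex.I • (LinearMap.adjoint Uh) (H (Uh (c t))))) t) :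
    ∀ t ∈ Set.Icc t₀ t₁,
      ⟪Uh (c t), H (Uh (c t))⟫_ℂ = ⟪Uh (c t₀), H (Uh (c t₀))⟫_ℂ := by
  have key : ∀ t ∈ Set.Icc t₀ t₁,
      HasDerivAt (fun s => (⟪Uh (c s), H (Uh (c s))⟫_ℂ)) 0 t := by
    intro t ht
    have hc' := hc t ht
    set w := H (Uh (c t)) with hw
    set d := (LinearMap.adjoint Uh) w with hd
    set c' := -(Complex.I • d) with hc'def
    have hf : HasDerivAt (fun s => Uh (c s)) (Uh c') t := by
      exact (((LinearMap.toContinuousLinearMap Uh).restrictScalars ℝ).hasFDerivAt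
        (x := c t)).comp_hasDerivAt t hc'
    have hg : HasDerivAt (fun s => H (Uh (c s))) (H (Uh c')) t := by
      exact (((LinearMap.toContinuousLinearMap H).restrictScalars ℝ).hasFDerivAt
        (x := Uh (c t))).comp_hasDerivAt t hf
    have hsum := hf.inner (𝕜 := ℂ) hg
    have h3 : ⟪w, Uh d⟫_ℂ = ⟪d, d⟫_ℂ := by
      rw [← LinearMap.adjoint_inner_left, ← hd]
    have h1 : ⟪Uh (c t), H (Uh c')⟫_ℂ = -(Complex.I * ⟪d, d⟫_ℂ) := by
      rw [hc'def, map_neg, map_smul, map_neg, map_smul, inner_neg_right,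
        inner_smul_right, ← hH, ← hw, h3]
    have h2 : ⟪Uh c', w⟫_ℂ = Complex.I * ⟪d, d⟫_ℂ := by
      have hwd : ⟪Uh d, w⟫_ℂ = ⟪d, d⟫_ℂ := by
        rw [← inner_conj_symm, h3, inner_conj_symm]
      rw [hc'def, map_neg, map_smul, inner_neg_left, inner_smul_left, hwd]
      simp [Complex.conj_I]
    have hzero : ⟪Uh (c t), H (Uh c')⟫_ℂ + ⟪Uh c', w⟫_ℂ = 0 := by
      rw [h1, h2]; ring
    rw [← hzero]
    exact hsum
  intro t ht
  have := constant_of_has_deriv_right_zero (f := fun s => ⟪Uh (c s), H (Uh (c s))⟫_ℂ)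
    (a := t₀) (b := t₁)
    (fun s hs => ((key s hs).continuousAt).continuousWithinAt)
    (fun s hs => ((key s (Set.mem_Icc_of_Ico hs)).hasDerivWithinAt))
  exact this t ht
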